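/- (Uniqueness of the completion of a strong b-metric space) Let (X,d) be a strong b-metric space with constant s ≥ 1 and let (X₁,d₁) and (X₂,d₂) be complete strong b-metric spaces with constant s that are both completions of (X,d), i.e. for k = 1,2 there is an isometric embedding j_k : X → X_k with j_k(X) dense in X_k. Then (X₁,d₁) and (X₂,d₂) are isometric: there exists a bijection F : X₁ → X₂ with d₂(F(u), F(v)) = d₁(u,v) for all u,v ∈ X₁. -/

import Mathlib

open Filter

/-- `d` is a strong b-metric on `X` with constant `s`. -/
def IsStrongBMetric {X : Type*} (s : ℝ) (d : X → X → ℝ) : Prop :=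
  (∀ x y, 0 ≤ d x y) ∧ (∀ x y, d x y = 0 ↔ x = y) ∧ (∀ x y, d x y = d y x) ∧
  (∀ x y z, d x y ≤ d x z + s * d z y)

/-- A sequence is Cauchy for `d` if `d(xₙ,xₘ) → 0` as `n,m → ∞`. -/
def IsBCauchy {X : Type*} (d : X → X → ℝ) (u : ℕ → X) : Prop :=
  ∀ ε : ℝ, 0 < ε → ∃ N : ℕ, ∀ m ≥ N, ∀ n ≥ N, d (u m) (u n) < ε

/-- `d` is complete: every Cauchy sequence converges. -/
def IsBComplete {X : Type*} (d : X → X → ℝ) : Prop :=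
  ∀ u : ℕ → X, IsBCauchy d u → ∃ x : X, Tendsto (fun n => d x (u n)) atTop (nhds 0)

/-- In a strong b-metric space, distances are continuous along convergent sequences. -/
lemma sbm_dist_tendsto {Y : Type*} {s : ℝ} {d : Y → Y → ℝ} (h : IsStrongBMetric s d)
    (a b : ℕ → Y) (ξ η : Y)
    (ha : Tendsto (fun n => d (a n) ξ) atTop (nhds 0))
    (hb : Tendsto (fun n => d (b n) η) atTop (nhds 0)) :
    Tendsto (fun n => d (a n) (b n)) atTop (nhds (d ξ η)) := by
  obtain ⟨pos, _, symm, tri⟩ := h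
  have tri' : ∀ x y z, d x y ≤ s * d x z + d z y := by
    intro x y z
    have := tri y x z
    rw [symm y x, symm y z, symm z x] at this
    linarith
  rw [tendsto_iff_norm_sub_tendsto_zero]
  have hub : ∀ n, ‖d (a n) (b n) - d ξ η‖ ≤ s * d (a n) ξ + s * d (b n) η := by
    intro n
    rw [Real.norm_eq_abs, abs_sub_le_iff]
    constructor
    · have h1 := tri' (a n) (b n) ξ
      have h2 := tri ξ (b n) η
      have h3 : s * d η (b n) = s * d (b n) η := by rw [symm η (b n)]
      linarith
    · have h1 := tri' ξ η (a n)
      have h2 := tri (a n) η (b n)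
      have h3 : s * d ξ (a n) = s * d (a n) ξ := by rw [symm ξ (a n)]
      linarith
  have hlim : Tendsto (fun n => s * d (a n) ξ + s * d (b n) η) atTop (nhds 0) := by
    have := (ha.const_mul s).add (hb.const_mul s)
    simpa using this
  exact squeeze_zero (fun n => norm_nonneg _) hub hlim

/-- A convergent sequence in a strong b-metric space is Cauchy. -/
lemma sbm_cauchy_of_tendsto {Y : Type*} {s : ℝ} (hs : 1 ≤ s) {d : Y → Y → ℝ}
    (h : IsStrongBMetric s d) (u : ℕ → Y) (ξ : Y)
    (hu : Tendsto (fun n => d (u n) ξ) atTop (nhds 0)) : IsBCauchy d u := by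
  obtain ⟨pos, _, symm, tri⟩ := h
  intro ε hε
  have hs0 : (0:ℝ) < s := lt_of_lt_of_le one_pos hs
  have hε' : 0 < ε / (2 * s) := by positivity
  obtain ⟨N, hN⟩ := eventually_atTop.mp (hu.eventually (gt_mem_nhds hε'))
  refine ⟨N, fun m hm n hn => ?_⟩
  have h1 := tri (u m) (u n) ξ
  have h2 : s * d ξ (u n) = s * d (u n) ξ := by rw [symm ξ (u n)]
  have h3 := hN m hm
  have h4 := hN n hn
  have h5 : s * d (u n) ξ < s * (ε / (2 * s)) := by
    exact (mul_lt_mul_iff_right₀ hs0).mpr h4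
  have h6 : s * (ε / (2 * s)) = ε / 2 := by field_simp
  have h7 : ε / (2 * s) ≤ ε / 2 := by
    apply div_le_div_of_nonneg_left (le_of_lt hε) (by norm_num)
    linarith
  linarith

theorem strong_bmetric_completion_unique
    {X : Type*} [Nonempty X] {X₁ : Type*} {X₂ : Type*}
    (s : ℝ) (hs : 1 ≤ s) (d : X → X → ℝ) (hd : IsStrongBMetric s d)
    (d₁ : X₁ → X₁ → ℝ) (hd₁ : IsStrongBMetric s d₁) (hc₁ : IsBComplete d₁)
    (d₂ : X₂ → X₂ → ℝ) (hd₂ : IsStrongBMetric s d₂) (hc₂ : IsBComplete d₂)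
    (j₁ : X → X₁) (hj₁ : ∀ x y, d₁ (j₁ x) (j₁ y) = d x y)
    (hdense₁ : ∀ ξ : X₁, ∃ u : ℕ → X, Tendsto (fun n => d₁ (j₁ (u n)) ξ) atTop (nhds 0))
    (j₂ : X → X₂) (hj₂ : ∀ x y, d₂ (j₂ x) (j₂ y) = d x y)
    (hdense₂ : ∀ ξ : X₂, ∃ u : ℕ → X, Tendsto (fun n => d₂ (j₂ (u n)) ξ) atTop (nhds 0)) :
    ∃ F : X₁ → X₂, Function.Bijective F ∧ ∀ u v : X₁, d₂ (F u) (F v) = d₁ u v := by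
  classical
  choose u hu using hdense₁
  -- each `u ξ` is Cauchy in X, hence `j₂ ∘ u ξ` is Cauchy in X₂
  have hC : ∀ ξ : X₁, IsBCauchy d₂ (fun n => j₂ (u ξ n)) := by
    intro ξ
    have hca : IsBCauchy d₁ (fun n => j₁ (u ξ n)) :=
      sbm_cauchy_of_tendsto hs hd₁ _ ξ (hu ξ)
    intro ε hε
    obtain ⟨N, hN⟩ := hca ε hε
    exact ⟨N, fun m hm n hn => by
      rw [hj₂]
      have := hN m hm n hn
      rwa [hj₁] at this⟩
  choose F hF using fun ξ => hc₂ _ (hC ξ)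
  have hF' : ∀ ξ, Tendsto (fun n => d₂ (j₂ (u ξ n)) (F ξ)) atTop (nhds 0) := by
    intro ξ
    have := hF ξ
    simpa [hd₂.2.2.1 (F ξ)] using this
  -- F is an isometry
  have hiso : ∀ ξ η : X₁, d₂ (F ξ) (F η) = d₁ ξ η := by
    intro ξ η
    have h1 : Tendsto (fun n => d (u ξ n) (u η n)) atTop (nhds (d₁ ξ η)) := by
      have := sbm_dist_tendsto hd₁ (fun n => j₁ (u ξ n)) (fun n => j₁ (u η n)) ξ η (hu ξ) (hu η)
      simpa [hj₁] using this
    have h2 : Tendsto (fun n => d (u ξ n) (u η n)) atTop (nhds (d₂ (F ξ) (F η))) := by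
      have := sbm_dist_tendsto hd₂ (fun n => j₂ (u ξ n)) (fun n => j₂ (u η n)) (F ξ) (F η)
        (hF' ξ) (hF' η)
      simpa [hj₂] using this
    exact tendsto_nhds_unique h2 h1
  refine ⟨F, ⟨?_, ?_⟩, hiso⟩
  · -- injective
    intro a b hab
    have : d₁ a b = 0 := by
      rw [← hiso a b, hab, (hd₂.2.1 _ _)]
    exact (hd₁.2.1 a b).mp this
  · -- surjective
    intro η
    obtain ⟨v, hv⟩ := hdense₂ η
    have hvC : IsBCauchy d₁ (fun n => j₁ (v n)) := by
      have hc : IsBCauchy d₂ (fun n => j₂ (v n)) :=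
        sbm_cauchy_of_tendsto hs hd₂ _ η hv
      intro ε hε
      obtain ⟨N, hN⟩ := hc ε hε
      exact ⟨N, fun m hm n hn => by
        rw [hj₁]
        have := hN m hm n hn
        rwa [hj₂] at this⟩
    obtain ⟨ξ, hξ⟩ := hc₁ _ hvC
    have hξ' : Tendsto (fun n => d₁ (j₁ (v n)) ξ) atTop (nhds 0) := by
      simpa [hd₁.2.2.1 ξ] using hξ
    refine ⟨ξ, ?_⟩
    have h1 : Tendsto (fun n => d (u ξ n) (v n)) atTop (nhds (d₁ ξ ξ)) := by
      have := sbm_dist_tendsto hd₁ (fun n => j₁ (u ξ n)) (fun n => j₁ (v n)) ξ ξ (hu ξ) hξ'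
      simpa [hj₁] using this
    have h2 : Tendsto (fun n => d (u ξ n) (v n)) atTop (nhds (d₂ (F ξ) η)) := by
      have := sbm_dist_tendsto hd₂ (fun n => j₂ (u ξ n)) (fun n => j₂ (v n)) (F ξ) η
        (hF' ξ) hv
      simpa [hj₂] using this
    have : d₂ (F ξ) η = d₁ ξ ξ := tendsto_nhds_unique h2 h1
    rw [(hd₁.2.1 ξ ξ).mpr rfl] at this
    exact (hd₂.2.1 _ _).mp this
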